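/- Let l ≥ 0 be a natural number. Let α : ℂ[x₁,…,x₅] → ℂ[y₁^{±1}, y₂^{±1}] be the ℂ-algebra homomorphism determined by α(x₁) = y₁y₂^{−l}, α(x₂) = y₁, α(x₃) = y₂, α(x₄) = y₂, α(x₅) = y₂. Then the kernel of α equals the ideal generated by the three binomials x₃ − x₄, x₃ − x₅, and x₁x₅^l − x₂. -/

import Mathlib

open MvPolynomial

/-- The Laurent monomial `y₁^{v 0} y₂^{v 1}` in the Laurent polynomial ring
`ℂ[y₁^{±1}, y₂^{±1}]`, realized as `AddMonoidAlgebra ℂ (Fin 2 → ℤ)`. -/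
noncomputable def laurentMonomial2 (v : Fin 2 → ℤ) : AddMonoidAlgebra ℂ (Fin 2 → ℤ) :=
  AddMonoidAlgebra.single v 1

namespace Toric201
noncomputable section

def f (l : ℕ) : (Fin 2 →₀ ℕ) →+ (Fin 2 → ℤ) where
  toFun d := (d 0 : ℤ) • ![1, -(l:ℤ)] + (d 1 : ℤ) • ![0, 1]
  map_zero' := by simp
  map_add' d e := by
    simp only [Finsupp.add_apply]
    push_cast
    rw [add_smul, add_smul]
    abel

lemma f_inj (l : ℕ) : Function.Injective (f l) := by
  intro d e h
  have h0 := congrFun h 0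
  have h1 := congrFun h 1
  simp only [f, AddMonoidHom.coe_mk, ZeroHom.coe_mk, Pi.add_apply, Pi.smul_apply,
    Matrix.cons_val_zero, Matrix.cons_val_one, Matrix.head_cons, smul_eq_mul,
    mul_one, mul_zero, mul_neg, add_zero, zero_add] at h0 h1
  have hd0 : d 0 = e 0 := by exact_mod_cast h0
  rw [hd0] at h1
  have hd1 : d 1 = e 1 := by exact_mod_cast by linarith [h1]
  ext i
  fin_cases i
  · exact hd0
  · exact hd1

def ι (l : ℕ) : MvPolynomial (Fin 2) ℂ →ₐ[ℂ] AddMonoidAlgebra ℂ (Fin 2 → ℤ) :=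
  AddMonoidAlgebra.mapDomainAlgHom ℂ ℂ (f l)

lemma hX : ∀ (i : Fin 2), (X i : MvPolynomial (Fin 2) ℂ) = AddMonoidAlgebra.single (Finsupp.single i 1) 1 := fun _ => rfl

lemma ι_X (l : ℕ) (i : Fin 2) :
    (ι l) (X i) = laurentMonomial2 (![![1, -(l:ℤ)], ![0, 1]] i) := by
  rw [ι, hX]
  erw [AddMonoidAlgebra.mapDomainAlgHom_apply, AddMonoidAlgebra.mapDomain_single,
    laurentMonomial2]
  congr 1
  fin_cases i <;>
    · ext j
      fin_cases j <;> simp [f, Finsupp.single_apply]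

lemma ι_inj (l : ℕ) : Function.Injective (ι l) :=
  AddMonoidAlgebra.mapDomain_injective (f_inj l)

def φ (l : ℕ) : MvPolynomial (Fin 5) ℂ →ₐ[ℂ] MvPolynomial (Fin 2) ℂ :=
  aeval ![X 0, X 0 * X 1 ^ l, X 1, X 1, X 1]

def α (l : ℕ) : MvPolynomial (Fin 5) ℂ →ₐ[ℂ] AddMonoidAlgebra ℂ (Fin 2 → ℤ) :=
  aeval ![laurentMonomial2 ![1, -(l : ℤ)], laurentMonomial2 ![1, 0],
    laurentMonomial2 ![0, 1], laurentMonomial2 ![0, 1], laurentMonomial2 ![0, 1]]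

lemma single_pow (l : ℕ) (v : Fin 2 → ℤ) :
    (laurentMonomial2 v) ^ l = laurentMonomial2 (l • v) := by
  rw [laurentMonomial2, laurentMonomial2, AddMonoidAlgebra.single_pow, one_pow]

lemma α_eq (l : ℕ) : α l = (ι l).comp (φ l) := by
  apply MvPolynomial.algHom_ext
  intro i
  rw [AlgHom.comp_apply, α, φ, aeval_X, aeval_X]
  fin_cases i
  · show laurentMonomial2 ![1, -(l:ℤ)] = (ι l) (X 0)
    rw [ι_X]; rfl
  · show laurentMonomial2 ![1, 0] = (ι l) (X 0 * X 1 ^ l)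
    rw [map_mul, map_pow, ι_X, ι_X]
    show laurentMonomial2 ![1, 0]
      = laurentMonomial2 ![1, -(l:ℤ)] * laurentMonomial2 ![0, 1] ^ l
    rw [single_pow, laurentMonomial2, laurentMonomial2, laurentMonomial2,
      AddMonoidAlgebra.single_mul_single, one_mul]
    congr 1
    ext j
    fin_cases j <;> simp
  · show laurentMonomial2 ![0, 1] = (ι l) (X 1)
    rw [ι_X]; rfl
  · show laurentMonomial2 ![0, 1] = (ι l) (X 1)
    rw [ι_X]; rfl
  · show laurentMonomial2 ![0, 1] = (ι l) (X 1)
    rw [ι_X]; rfl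

def I (l : ℕ) : Ideal (MvPolynomial (Fin 5) ℂ) :=
  Ideal.span {(X 2 - X 3 : MvPolynomial (Fin 5) ℂ), X 2 - X 4, X 0 * X 4 ^ l - X 1}

lemma mem1 (l : ℕ) : (X 2 - X 3 : MvPolynomial (Fin 5) ℂ) ∈ I l :=
  Ideal.subset_span (by simp)
lemma mem2 (l : ℕ) : (X 2 - X 4 : MvPolynomial (Fin 5) ℂ) ∈ I l :=
  Ideal.subset_span (by simp)
lemma mem3 (l : ℕ) : (X 0 * X 4 ^ l - X 1 : MvPolynomial (Fin 5) ℂ) ∈ I l :=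
  Ideal.subset_span (by simp)

def ψ (l : ℕ) : MvPolynomial (Fin 2) ℂ →ₐ[ℂ] (MvPolynomial (Fin 5) ℂ ⧸ I l) :=
  aeval ![Ideal.Quotient.mk (I l) (X 0), Ideal.Quotient.mk (I l) (X 2)]

lemma ψφ (l : ℕ) : (ψ l).comp (φ l) = Ideal.Quotient.mkₐ ℂ (I l) := by
  apply MvPolynomial.algHom_ext
  intro i
  rw [AlgHom.comp_apply, Ideal.Quotient.mkₐ_eq_mk, φ, aeval_X]
  have e23 : Ideal.Quotient.mk (I l) (X 2) = Ideal.Quotient.mk (I l) (X 3) :=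
    Ideal.Quotient.eq.2 (mem1 l)
  have e24 : Ideal.Quotient.mk (I l) (X 2) = Ideal.Quotient.mk (I l) (X 4) :=
    Ideal.Quotient.eq.2 (mem2 l)
  fin_cases i
  · show (ψ l) (X 0) = Ideal.Quotient.mk (I l) (X 0)
    rw [ψ, aeval_X]; rfl
  · show (ψ l) (X 0 * X 1 ^ l) = Ideal.Quotient.mk (I l) (X 1)
    rw [map_mul, map_pow, ψ, aeval_X, aeval_X]
    show Ideal.Quotient.mk (I l) (X 0) * (Ideal.Quotient.mk (I l) (X 2)) ^ l
      = Ideal.Quotient.mk (I l) (X 1)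
    rw [← map_pow, ← map_mul]
    refine Ideal.Quotient.eq.2 ?_
    have h1 : (X 0 : MvPolynomial (Fin 5) ℂ) * X 2 ^ l - X 1
        = X 0 * (X 2 ^ l - X 4 ^ l) + (X 0 * X 4 ^ l - X 1) := by ring
    rw [h1]
    obtain ⟨c, hc⟩ := sub_dvd_pow_sub_pow (X 2 : MvPolynomial (Fin 5) ℂ) (X 4) l
    rw [hc]
    exact (I l).add_mem ((I l).mul_mem_left _ ((I l).mul_mem_right _ (mem2 l))) (mem3 l)
  · show (ψ l) (X 1) = Ideal.Quotient.mk (I l) (X 2)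
    rw [ψ, aeval_X]; rfl
  · show (ψ l) (X 1) = Ideal.Quotient.mk (I l) (X 3)
    rw [ψ, aeval_X]
    show Ideal.Quotient.mk (I l) (X 2) = _; exact e23
  · show (ψ l) (X 1) = Ideal.Quotient.mk (I l) (X 4)
    rw [ψ, aeval_X]
    show Ideal.Quotient.mk (I l) (X 2) = _; exact e24

lemma ker_φ (l : ℕ) : RingHom.ker (φ l) = I l := by
  ext p
  simp only [RingHom.mem_ker]
  constructor
  · intro hp
    have := congrArg (ψ l) hp
    rw [map_zero, ← AlgHom.comp_apply, ψφ, Ideal.Quotient.mkₐ_eq_mk] at this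
    exact (Ideal.Quotient.eq_zero_iff_mem).1 this
  · intro hp
    have hle : I l ≤ RingHom.ker (φ l) := by
      rw [I, Ideal.span_le]
      rintro q hq
      simp only [Set.mem_insert_iff, Set.mem_singleton_iff] at hq
      have k2 : (φ l) (X 2) = X 1 := by rw [φ, aeval_X]; rfl
      have k3 : (φ l) (X 3) = X 1 := by rw [φ, aeval_X]; rfl
      have k4 : (φ l) (X 4) = X 1 := by rw [φ, aeval_X]; rfl
      have k0 : (φ l) (X 0) = X 0 := by rw [φ, aeval_X]; rfl
      have k1 : (φ l) (X 1) = X 0 * X 1 ^ l := by rw [φ, aeval_X]; rfl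
      rcases hq with rfl | rfl | rfl <;>
        simp [SetLike.mem_coe, RingHom.mem_ker, map_sub, map_mul, map_pow,
          k0, k1, k2, k3, k4]
    exact hle hp
  end
end Toric201

theorem toric_ideal_case_2_0_1 (l : ℕ) :
    RingHom.ker (MvPolynomial.aeval
        ![laurentMonomial2 ![1, -(l : ℤ)], laurentMonomial2 ![1, 0],
          laurentMonomial2 ![0, 1], laurentMonomial2 ![0, 1], laurentMonomial2 ![0, 1]] :
      MvPolynomial (Fin 5) ℂ →ₐ[ℂ] AddMonoidAlgebra ℂ (Fin 2 → ℤ)) =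
    Ideal.span {(X 2 - X 3 : MvPolynomial (Fin 5) ℂ), X 2 - X 4, X 0 * X 4 ^ l - X 1} := by
  have h : RingHom.ker (Toric201.α l) = Toric201.I l := by
    rw [← Toric201.ker_φ l]
    ext p
    simp only [RingHom.mem_ker, Toric201.α_eq, AlgHom.comp_apply]
    constructor
    · intro hp
      exact Toric201.ι_inj l (by rw [hp, map_zero])
    · intro hp
      rw [hp, map_zero]
  exact h
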